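/- Fix i₀ ∈ ℕ and n > i₀ in the quasi-similar Cantor construction, and define x ∼ y for x, y ∈ ∂A_n iff |x − y| is an integer multiple r/(k_1⋯k_{i₀}) with 0 ≤ r ≤ k_1⋯k_{i₀}. Then ∼ is an equivalence relation on ∂A_n, the equivalence class containing 0 has 2·m_1⋯m_{i₀} elements, every other class has m_1⋯m_{i₀} elements, and the number of classes is 2·m_{i₀+1}⋯m_n − 1. -/

import Mathlib

open scoped Classical
open MeasureTheory

/-- The data of a quasi-similar Cantor set construction with parameters `(kᵢ)`, `(mᵢ)`
(indexed from `1`), `2 ≤ mᵢ ≤ ⌊kᵢ/2⌋`.  `ends n` is the (finite) set of left endpoints of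
the `m₁⋯mₙ` closed intervals, each of length `1/(k₁⋯kₙ)`, forming the `n`-th stage `Aₙ`
(`ends 0 = {0}`, the interval `[0,1]`).  At each stage every interval is divided into
`k_{n+1}` equal parts of which `m_{n+1}` are selected according to a fixed pattern
`off (n+1)` of offsets (the same configuration in each interval), including the first and
the last subinterval, with pairwise disjoint closures. -/
structure QSCantor where
  k : ℕ → ℕ
  m : ℕ → ℕ
  ends : ℕ → Finset ℝ
  off : ℕ → Finset ℝ
  two_le_m : ∀ i, 2 ≤ m i
  m_le_half_k : ∀ i, m i ≤ k i / 2
  ends_zero : ends 0 = {0}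
  card_off : ∀ n, (off (n + 1)).card = m (n + 1)
  off_zero : ∀ n, (0 : ℝ) ∈ off (n + 1)
  off_last : ∀ n,
    (∏ i ∈ Finset.range n, (k (i + 1) : ℝ))⁻¹ -
      (∏ i ∈ Finset.range (n + 1), (k (i + 1) : ℝ))⁻¹ ∈ off (n + 1)
  off_mult : ∀ n, ∀ o ∈ off (n + 1), ∃ r : ℕ,
    (r : ℝ) * (∏ i ∈ Finset.range (n + 1), (k (i + 1) : ℝ))⁻¹ = o ∧ r + 1 ≤ k (n + 1)
  off_sep : ∀ n, ∀ o ∈ off (n + 1), ∀ o' ∈ off (n + 1), o ≠ o' →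
    2 * (∏ i ∈ Finset.range (n + 1), (k (i + 1) : ℝ))⁻¹ ≤ |o - o'|
  ends_succ : ∀ n, (ends (n + 1) : Set ℝ) =
    {z : ℝ | ∃ b ∈ ends n, ∃ o ∈ off (n + 1), z = b + o}

namespace QSCantor

/-- Length `1/(k₁⋯kₙ)` of the stage-`n` intervals. -/
noncomputable def len (C : QSCantor) (n : ℕ) : ℝ :=
  (∏ i ∈ Finset.range n, (C.k (i + 1) : ℝ))⁻¹

/-- The product `m₁⋯mₙ`. -/
def prodM (C : QSCantor) (n : ℕ) : ℕ := ∏ i ∈ Finset.range n, C.m (i + 1)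

/-- The `n`-th stage `Aₙ` of the construction: a union of `m₁⋯mₙ` closed intervals. -/
noncomputable def stage (C : QSCantor) (n : ℕ) : Set ℝ :=
  ⋃ a ∈ C.ends n, Set.Icc a (a + C.len n)

/-- The quasi-similar Cantor set `𝒞 = ⋂ₙ Aₙ`. -/
noncomputable def cantorSet (C : QSCantor) : Set ℝ := ⋂ n, C.stage n

/-- The approximating absolutely continuous function `fₙ`: `fₙ(0) = 0`, `fₙ' = 0` off
`Aₙ` and `fₙ' = (k₁⋯kₙ)/(m₁⋯mₙ)` on `Aₙ`; equivalently
`fₙ(x) = (k₁⋯kₙ)/(m₁⋯mₙ) · λ(Aₙ ∩ [0,x])`. -/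
noncomputable def fseq (C : QSCantor) (n : ℕ) (x : ℝ) : ℝ :=
  ((∏ i ∈ Finset.range n, (C.k (i + 1) : ℝ)) / (C.prodM n : ℝ)) *
    (volume (C.stage n ∩ Set.Icc 0 x)).toReal

/-- The associated singular function `f_s = lim fₙ`. -/
noncomputable def fs (C : QSCantor) (x : ℝ) : ℝ :=
  Filter.limUnder Filter.atTop (fun n => C.fseq n x)


variable (C : QSCantor)

lemma four_le_k (i : ℕ) : 4 ≤ C.k i := by
  have h1 := C.two_le_m i
  have h2 := C.m_le_half_k i
  omega

lemma len_pos (n : ℕ) : 0 < C.len n := by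
  unfold len
  rw [inv_pos]
  apply Finset.prod_pos
  intro i _
  have := C.four_le_k (i + 1)
  positivity

lemma len_zero : C.len 0 = 1 := by simp [len]

lemma len_succ (n : ℕ) : C.len n = (C.k (n + 1) : ℝ) * C.len (n + 1) := by
  unfold len
  rw [Finset.prod_range_succ, mul_inv]
  have hk : (0:ℝ) < C.k (n+1) := by
    have := C.four_le_k (n + 1); positivity
  rw [mul_comm, mul_assoc, inv_mul_cancel₀ (by positivity), mul_one]

lemma len_antitone {a b : ℕ} (h : a ≤ b) : C.len b ≤ C.len a := by
  induction b with
  | zero => simp_all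
  | succ b ih =>
    rcases Nat.lt_or_ge a (b+1) with h' | h'
    · have := ih (by omega)
      have hk : (1:ℝ) ≤ C.k (b+1) := by
        have := C.four_le_k (b+1); exact_mod_cast by omega
      nlinarith [C.len_pos (b+1), C.len_succ b]
    · have : a = b + 1 := by omega
      simp [this]

lemma off_bounds {n : ℕ} {o : ℝ} (ho : o ∈ C.off (n + 1)) :
    0 ≤ o ∧ o ≤ C.len n - C.len (n + 1) := by
  obtain ⟨r, hr, hrk⟩ := C.off_mult n o ho
  have hr' : o = (r : ℝ) * C.len (n + 1) := hr.symm
  have hpos := C.len_pos (n + 1)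
  constructor
  · rw [hr']; positivity
  · rw [hr', C.len_succ n]
    have hrk' : (r : ℝ) + 1 ≤ (C.k (n+1) : ℝ) := by exact_mod_cast hrk
    have : (r : ℝ) ≤ (C.k (n+1) : ℝ) - 1 := by linarith
    nlinarith

lemma off_int {n : ℕ} {o : ℝ} (ho : o ∈ C.off (n + 1)) :
    ∃ r : ℤ, o = (r : ℝ) * C.len (n + 1) := by
  obtain ⟨r, hr, _⟩ := C.off_mult n o ho
  refine ⟨(r:ℤ), ?_⟩
  rw [← hr]
  unfold len
  norm_num

/-- Iterated sumset of offsets from stage `a+1` through stage `b`. -/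
noncomputable def tails (C : QSCantor) (a : ℕ) : ℕ → Finset ℝ
  | 0 => {0}
  | b + 1 => if b + 1 ≤ a then {0} else Finset.image₂ (· + ·) (tails C a b) (C.off (b + 1))

lemma tails_self (a : ℕ) : C.tails a a = {0} := by
  cases a with
  | zero => rfl
  | succ b => simp [tails]

lemma tails_succ {a b : ℕ} (h : a ≤ b) :
    C.tails a (b + 1) = Finset.image₂ (· + ·) (C.tails a b) (C.off (b + 1)) := by
  rw [tails, if_neg (by omega)]

lemma tails_bounds {a b : ℕ} (hab : a ≤ b) :
    ∀ t ∈ C.tails a b, 0 ≤ t ∧ t ≤ C.len a - C.len b := by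
  induction b, hab using Nat.le_induction with
  | base => rw [tails_self]; intro t ht; simp at ht; simp [ht]
  | succ b hab ih =>
    rw [C.tails_succ hab]
    intro t ht
    rw [Finset.mem_image₂] at ht
    obtain ⟨s, hs, o, ho, rfl⟩ := ht
    obtain ⟨h1, h2⟩ := ih s hs
    obtain ⟨h3, h4⟩ := C.off_bounds ho
    constructor
    · linarith
    · linarith

lemma tails_sep {a b : ℕ} (hab : a ≤ b) :
    ∀ t ∈ C.tails a b, ∀ t' ∈ C.tails a b, t ≠ t' → 2 * C.len b ≤ |t - t'| := by
  induction b, hab using Nat.le_induction with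
  | base =>
    rw [tails_self]; intro t ht t' ht' hne; simp at ht ht'
    exact absurd (ht.trans ht'.symm) hne
  | succ b hab ih =>
    rw [C.tails_succ hab]
    intro t ht t' ht' hne
    rw [Finset.mem_image₂] at ht ht'
    obtain ⟨s, hs, o, ho, rfl⟩ := ht
    obtain ⟨s', hs', o', ho', rfl⟩ := ht'
    by_cases hss : s = s'
    · subst hss
      have hoo : o ≠ o' := fun h => hne (by rw [h])
      have h0 : 2 * C.len (b+1) ≤ |o - o'| := C.off_sep b o ho o' ho' hoo
      calc 2 * C.len (b+1) ≤ |o - o'| := h0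
        _ = |(s + o) - (s + o')| := by ring_nf
    · have h1 : 2 * C.len b ≤ |s - s'| := ih s hs s' hs' hss
      obtain ⟨ho1, ho2⟩ := C.off_bounds ho
      obtain ⟨ho1', ho2'⟩ := C.off_bounds ho'
      have h2 : |o' - o| ≤ C.len b - C.len (b+1) := by
        rw [abs_sub_le_iff]; constructor <;> linarith
      have h3 : |s - s'| - |o' - o| ≤ |(s - s') - (o' - o)| :=
        abs_sub_abs_le_abs_sub _ _
      have h4 : (s - s') - (o' - o) = (s + o) - (s' + o') := by ring
      rw [h4] at h3
      have hlb := C.len_pos b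
      have hlb1 := C.len_pos (b+1)
      linarith

lemma tails_card {a b : ℕ} (hab : a ≤ b) :
    (C.tails a b).card = ∏ i ∈ Finset.Icc (a+1) b, C.m i := by
  induction b, hab using Nat.le_induction with
  | base => rw [tails_self]; simp
  | succ b hab ih =>
    rw [C.tails_succ hab]
    have hinj : Set.InjOn (fun p : ℝ × ℝ => p.1 + p.2) ((C.tails a b) ×ˢ (C.off (b+1))) := by
      rintro ⟨s, o⟩ hp ⟨s', o'⟩ hp' heq
      simp only [Finset.coe_product, Set.mem_prod, Finset.mem_coe] at hp hp'
      simp only at heq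
      have hss : s = s' := by
        by_contra hss
        have h1 := C.tails_sep hab s hp.1 s' hp'.1 hss
        obtain ⟨ho1, ho2⟩ := C.off_bounds hp.2
        obtain ⟨ho1', ho2'⟩ := C.off_bounds hp'.2
        have h2 : s - s' = o' - o := by linarith
        have h3 : |o' - o| ≤ C.len b - C.len (b+1) := by
          rw [abs_sub_le_iff]; constructor <;> linarith
        rw [h2] at h1
        have hlb := C.len_pos b
        have hlb1 := C.len_pos (b+1)
        linarith
      subst hss
      have : o = o' := by linarith
      simp [this]
    rw [Finset.card_image₂_iff.mpr hinj, ih, C.card_off b,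
      Finset.prod_Icc_succ_top (by omega)]

lemma tails_zero_mem {a b : ℕ} (hab : a ≤ b) : (0:ℝ) ∈ C.tails a b := by
  induction b, hab using Nat.le_induction with
  | base => rw [tails_self]; simp
  | succ b hab ih =>
    rw [C.tails_succ hab, Finset.mem_image₂]
    exact ⟨0, ih, 0, C.off_zero b, by ring⟩

lemma tails_max_mem {a b : ℕ} (hab : a ≤ b) : C.len a - C.len b ∈ C.tails a b := by
  induction b, hab using Nat.le_induction with
  | base => rw [tails_self]; simp
  | succ b hab ih =>
    rw [C.tails_succ hab, Finset.mem_image₂]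
    exact ⟨C.len a - C.len b, ih, C.len b - C.len (b+1), C.off_last b, by ring⟩

lemma tails_int {a b : ℕ} (hab : a ≤ b) :
    ∀ t ∈ C.tails a b, ∃ r : ℤ, t = (r : ℝ) * C.len b := by
  induction b, hab using Nat.le_induction with
  | base => rw [tails_self]; intro t ht; simp at ht; exact ⟨0, by simp [ht]⟩
  | succ b hab ih =>
    rw [C.tails_succ hab]
    intro t ht
    rw [Finset.mem_image₂] at ht
    obtain ⟨s, hs, o, ho, rfl⟩ := ht
    obtain ⟨r, hr⟩ := ih s hs
    obtain ⟨r', hr'⟩ := C.off_int ho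
    refine ⟨r * (C.k (b+1) : ℤ) + r', ?_⟩
    rw [hr, hr', C.len_succ b]
    push_cast
    ring

lemma ends_eq_image₂ {a b : ℕ} (hab : a ≤ b) :
    C.ends b = Finset.image₂ (· + ·) (C.ends a) (C.tails a b) := by
  induction b, hab using Nat.le_induction with
  | base =>
    rw [tails_self]
    ext z
    simp
  | succ b hab ih =>
    apply Finset.coe_injective
    rw [C.ends_succ b, ih, Finset.coe_image₂, C.tails_succ hab]
    ext z
    constructor
    · rintro ⟨h, hh, o, ho, rfl⟩
      rw [Finset.mem_image₂] at hh
      obtain ⟨e, he, t, ht, rfl⟩ := hh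
      refine Set.mem_image2.mpr ⟨e, Finset.mem_coe.mpr he, t + o, ?_, by ring⟩
      exact Finset.mem_coe.mpr (Finset.mem_image₂.mpr ⟨t, ht, o, ho, rfl⟩)
    · rintro ⟨e, he, t, ht, rfl⟩
      rw [Finset.mem_coe, Finset.mem_image₂] at ht
      obtain ⟨t', ht', o, ho, rfl⟩ := ht
      refine ⟨e + t', ?_, o, ho, by ring⟩
      exact Finset.mem_image₂.mpr ⟨e, Finset.mem_coe.mp he, t', ht', rfl⟩


lemma ends_eq_tails0 (b : ℕ) : C.ends b = C.tails 0 b := by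
  rw [C.ends_eq_image₂ (Nat.zero_le b), C.ends_zero]
  ext z
  simp [Finset.mem_image₂]

lemma prodM_eq_Icc (b : ℕ) : C.prodM b = ∏ i ∈ Finset.Icc 1 b, C.m i := by
  unfold prodM
  rw [← Finset.Ico_add_one_right_eq_Icc, Finset.prod_Ico_eq_prod_range]
  norm_num
  exact Finset.prod_congr rfl fun x _ => by rw [Nat.add_comm]

lemma ends_card (b : ℕ) : (C.ends b).card = C.prodM b := by
  rw [C.ends_eq_tails0, C.tails_card (Nat.zero_le b), C.prodM_eq_Icc]

lemma ends_bounds {b : ℕ} {h : ℝ} (hh : h ∈ C.ends b) : 0 ≤ h ∧ h ≤ 1 - C.len b := by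
  have := C.tails_bounds (Nat.zero_le b) h (by rwa [← C.ends_eq_tails0])
  rwa [C.len_zero] at this

lemma ends_sep {b : ℕ} {h h' : ℝ} (hh : h ∈ C.ends b) (hh' : h' ∈ C.ends b) (hne : h ≠ h') :
    2 * C.len b ≤ |h - h'| := by
  rw [C.ends_eq_tails0] at hh hh'
  exact C.tails_sep (Nat.zero_le b) h hh h' hh' hne

lemma ends_int {b : ℕ} {h : ℝ} (hh : h ∈ C.ends b) : ∃ r : ℤ, h = (r : ℝ) * C.len b := by
  rw [C.ends_eq_tails0] at hh
  exact C.tails_int (Nat.zero_le b) h hh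

lemma zero_mem_ends (b : ℕ) : (0:ℝ) ∈ C.ends b := by
  rw [C.ends_eq_tails0]
  exact C.tails_zero_mem (Nat.zero_le b)

lemma prodM_pos (b : ℕ) : 0 < C.prodM b := by
  unfold prodM
  apply Finset.prod_pos
  intro i _
  have := C.two_le_m (i + 1)
  omega

/-- `bd` of the theorem statement. -/
noncomputable def bdF (C : QSCantor) (n : ℕ) : Finset ℝ :=
  C.ends n ∪ (C.ends n).image (fun a => a + C.len n)

/-- `R` of the theorem statement. -/
def RF (C : QSCantor) (i₀ : ℕ) : ℝ → ℝ → Prop :=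
  fun z w => ∃ r : ℤ, z - w = (r : ℝ) * C.len i₀

lemma mem_bdF {n i₀ : ℕ} (hi : i₀ ≤ n) {z : ℝ} :
    z ∈ C.bdF n ↔ ∃ h ∈ C.ends i₀, ∃ t ∈ C.tails i₀ n,
      (z = h + t ∨ z = h + t + C.len n) := by
  simp only [bdF, Finset.mem_union, Finset.mem_image, C.ends_eq_image₂ hi,
    Finset.mem_image₂]
  constructor
  · rintro (⟨h, hh, t, ht, rfl⟩ | ⟨a, ⟨h, hh, t, ht, rfl⟩, rfl⟩)
    · exact ⟨h, hh, t, ht, Or.inl rfl⟩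
    · exact ⟨h, hh, t, ht, Or.inr rfl⟩
  · rintro ⟨h, hh, t, ht, rfl | rfl⟩
    · exact Or.inl ⟨h, hh, t, ht, rfl⟩
    · exact Or.inr ⟨h + t, ⟨h, hh, t, ht, rfl⟩, rfl⟩

lemma left_mem_bdF {n i₀ : ℕ} (hi : i₀ ≤ n) {h t : ℝ} (hh : h ∈ C.ends i₀)
    (ht : t ∈ C.tails i₀ n) : h + t ∈ C.bdF n :=
  (C.mem_bdF hi).mpr ⟨h, hh, t, ht, Or.inl rfl⟩

lemma right_mem_bdF {n i₀ : ℕ} (hi : i₀ ≤ n) {h t : ℝ} (hh : h ∈ C.ends i₀)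
    (ht : t ∈ C.tails i₀ n) : h + t + C.len n ∈ C.bdF n :=
  (C.mem_bdF hi).mpr ⟨h, hh, t, ht, Or.inr rfl⟩

/-- If `x = r·L` with `r : ℤ` and `-L ≤ x ≤ L`, then `x ∈ {-L, 0, L}`. -/
lemma int_window {L x : ℝ} (hL : 0 < L) (r : ℤ) (hx : x = (r : ℝ) * L)
    (h0 : -L ≤ x) (h1 : x ≤ L) : x = -L ∨ x = 0 ∨ x = L := by
  have hr1 : (r : ℝ) ≤ 1 := by nlinarith
  have hr2 : (-1 : ℝ) ≤ (r : ℝ) := by nlinarith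
  have hr1' : r ≤ 1 := by exact_mod_cast hr1
  have hr2' : (-1 : ℤ) ≤ r := by exact_mod_cast hr2
  interval_cases r
  · left; rw [hx]; push_cast; ring
  · right; left; rw [hx]; push_cast; ring
  · right; right; rw [hx]; push_cast; ring

lemma len_big {i₀ n : ℕ} (hn : i₀ < n) : 4 * C.len n ≤ C.len i₀ := by
  have h1 := C.len_succ i₀
  have h2 : C.len n ≤ C.len (i₀ + 1) := C.len_antitone (by omega)
  have h3 : (4 : ℝ) ≤ C.k (i₀ + 1) := by exact_mod_cast C.four_le_k (i₀ + 1)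
  have h4 := C.len_pos (i₀ + 1)
  nlinarith

variable {C}

/-- The class of `0` consists of `ends i₀` together with its translate by `len i₀`. -/
lemma filter0_eq {i₀ n : ℕ} (hn : i₀ < n) :
    (C.bdF n).filter (fun w => C.RF i₀ w 0) =
      C.ends i₀ ∪ (C.ends i₀).image (fun a => a + C.len i₀) := by
  have hi : i₀ ≤ n := hn.le
  have hL := C.len_pos i₀
  have hl := C.len_pos n
  have h4 := C.len_big hn
  ext w
  simp only [Finset.mem_filter, Finset.mem_union, Finset.mem_image]
  constructor
  · rintro ⟨hw, r, hr⟩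
    obtain ⟨h, hh, t, ht, hcase⟩ := (C.mem_bdF hi).mp hw
    obtain ⟨rh, hrh⟩ := C.ends_int hh
    obtain ⟨ht0, ht1⟩ := C.tails_bounds hi t ht
    rcases hcase with rfl | rfl
    · have hx : t = ((r - rh : ℤ) : ℝ) * C.len i₀ := by push_cast; linarith
      rcases int_window hL _ hx (by linarith) (by linarith) with h' | h' | h'
      · linarith
      · left; rw [h', add_zero]; exact hh
      · linarith
    · have hx : t + C.len n = ((r - rh : ℤ) : ℝ) * C.len i₀ := by push_cast; linarith
      rcases int_window hL _ hx (by linarith) (by linarith) with h' | h' | h'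
      · linarith
      · linarith
      · right; exact ⟨h, hh, by linarith⟩
  · rintro (hh | ⟨a, ha, rfl⟩)
    · obtain ⟨rh, hrh⟩ := C.ends_int hh
      refine ⟨?_, rh, by rw [hrh]; ring⟩
      have := C.left_mem_bdF hi hh (C.tails_zero_mem hi)
      simpa using this
    · obtain ⟨rh, hrh⟩ := C.ends_int ha
      refine ⟨?_, rh + 1, by rw [hrh]; push_cast; ring⟩
      have := C.right_mem_bdF hi ha (C.tails_max_mem hi)
      have heq : a + (C.len i₀ - C.len n) + C.len n = a + C.len i₀ := by ring
      rwa [heq] at this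

lemma filter0_card {i₀ n : ℕ} (hn : i₀ < n) :
    ((C.bdF n).filter (fun w => C.RF i₀ w 0)).card = 2 * C.prodM i₀ := by
  have hL := C.len_pos i₀
  have hdisj : Disjoint (C.ends i₀) ((C.ends i₀).image (fun a => a + C.len i₀)) := by
    rw [Finset.disjoint_left]
    rintro a ha hmem
    obtain ⟨a', ha', heq⟩ := Finset.mem_image.mp hmem
    by_cases hne : a = a'
    · subst hne; linarith
    · have := C.ends_sep ha ha' hne
      rw [show a - a' = C.len i₀ from by linarith, abs_of_pos hL] at this
      linarith
  rw [filter0_eq hn, Finset.card_union_of_disjoint hdisj,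
    Finset.card_image_of_injective _ (add_left_injective _), C.ends_card]
  ring

/-- The class of `h + α` for `α ∉ {0, len i₀}` is `ends i₀` translated by `α`. -/
lemma filter_eq {i₀ n : ℕ} (hn : i₀ < n) {h α : ℝ} (hh : h ∈ C.ends i₀)
    (hα0 : 0 ≤ α) (hα1 : α ≤ C.len i₀) (hne0 : α ≠ 0) (hneL : α ≠ C.len i₀)
    (hmem : ∀ h' ∈ C.ends i₀, h' + α ∈ C.bdF n) :
    (C.bdF n).filter (fun w => C.RF i₀ w (h + α)) =
      (C.ends i₀).image (fun a => a + α) := by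
  have hi : i₀ ≤ n := hn.le
  have hL := C.len_pos i₀
  have hl := C.len_pos n
  obtain ⟨rh, hrh⟩ := C.ends_int hh
  ext w
  simp only [Finset.mem_filter, Finset.mem_image]
  constructor
  · rintro ⟨hw, r, hr⟩
    obtain ⟨h', hh', t', ht', hcase⟩ := (C.mem_bdF hi).mp hw
    obtain ⟨rh', hrh'⟩ := C.ends_int hh'
    obtain ⟨ht0, ht1⟩ := C.tails_bounds hi t' ht'
    obtain ⟨α', hwα', hα'0, hα'1⟩ : ∃ α', w = h' + α' ∧ 0 ≤ α' ∧ α' ≤ C.len i₀ := by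
      rcases hcase with rfl | rfl
      · exact ⟨t', rfl, ht0, by linarith⟩
      · exact ⟨t' + C.len n, by ring, by linarith, by linarith⟩
    have hx : α' - α = ((r - rh' + rh : ℤ) : ℝ) * C.len i₀ := by
      rw [hwα'] at hr; push_cast; linarith
    rcases int_window hL _ hx (by linarith) (by linarith) with hc | hc | hc
    · exact absurd (by linarith : α = C.len i₀) hneL
    · exact ⟨h', hh', by rw [hwα']; linarith⟩
    · exact absurd (by linarith : α = 0) hne0
  · rintro ⟨a, ha, rfl⟩
    obtain ⟨ra, hra⟩ := C.ends_int ha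
    exact ⟨hmem a ha, ra - rh, by rw [hra, hrh]; push_cast; ring⟩

/-- Decomposition of a boundary point whose class is not the class of `0`. -/
lemma decomp {i₀ n : ℕ} (hn : i₀ < n) {z : ℝ} (hz : z ∈ C.bdF n)
    (hnR : ¬ C.RF i₀ z 0) :
    ∃ h ∈ C.ends i₀, ∃ α : ℝ, z = h + α ∧ 0 ≤ α ∧ α ≤ C.len i₀ ∧ α ≠ 0 ∧
      α ≠ C.len i₀ ∧ (∀ h' ∈ C.ends i₀, h' + α ∈ C.bdF n) ∧
      (α ∈ (C.tails i₀ n).erase 0 ∨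
        α ∈ ((C.tails i₀ n).erase (C.len i₀ - C.len n)).image
          (fun t => t + C.len n)) := by
  have hi : i₀ ≤ n := hn.le
  have hL := C.len_pos i₀
  have hl := C.len_pos n
  obtain ⟨h, hh, t, ht, hcase⟩ := (C.mem_bdF hi).mp hz
  obtain ⟨rh, hrh⟩ := C.ends_int hh
  obtain ⟨ht0, ht1⟩ := C.tails_bounds hi t ht
  rcases hcase with rfl | rfl
  · have htne : t ≠ 0 := by
      intro h0
      exact hnR ⟨rh, by rw [h0, hrh]; ring⟩
    refine ⟨h, hh, t, rfl, ht0, by linarith, htne, by intro h0; linarith, ?_, ?_⟩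
    · intro h' hh'
      exact C.left_mem_bdF hi hh' ht
    · exact Or.inl (Finset.mem_erase.mpr ⟨htne, ht⟩)
  · have hαL : t + C.len n ≠ C.len i₀ := by
      intro h0
      exact hnR ⟨rh + 1, by push_cast; rw [hrh]; linarith⟩
    refine ⟨h, hh, t + C.len n, by ring, by linarith, by linarith, by positivity,
      hαL, ?_, ?_⟩
    · intro h' hh'
      have := C.right_mem_bdF hi hh' ht
      rwa [show h' + t + C.len n = h' + (t + C.len n) from by ring] at this
    · refine Or.inr (Finset.mem_image.mpr ⟨t, Finset.mem_erase.mpr ⟨?_, ht⟩, rfl⟩)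
      intro h0
      exact hαL (by rw [h0]; ring)

lemma filter_card {i₀ n : ℕ} (hn : i₀ < n) {z : ℝ} (hz : z ∈ C.bdF n)
    (hnR : ¬ C.RF i₀ z 0) :
    ((C.bdF n).filter (fun w => C.RF i₀ w z)).card = C.prodM i₀ := by
  obtain ⟨h, hh, α, rfl, hα0, hα1, hne0, hneL, hmem, _⟩ := decomp hn hz hnR
  rw [filter_eq hn hh hα0 hα1 hne0 hneL hmem,
    Finset.card_image_of_injective _ (add_left_injective _), C.ends_card]

lemma class_count {i₀ n : ℕ} (hn : i₀ < n) :
    ((C.bdF n).image (fun z => (C.bdF n).filter (fun w => C.RF i₀ w z))).card =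
      2 * (∏ i ∈ Finset.Icc (i₀ + 1) n, C.m i) - 1 := by
  have hi : i₀ ≤ n := hn.le
  have hL := C.len_pos i₀
  have hl := C.len_pos n
  classical
  set A : Finset ℝ := (C.tails i₀ n).erase 0 ∪
    ((C.tails i₀ n).erase (C.len i₀ - C.len n)).image (fun t => t + C.len n) with hA
  have hAprop : ∀ α ∈ A, 0 ≤ α ∧ α ≤ C.len i₀ ∧ α ≠ 0 ∧ α ≠ C.len i₀ := by
    intro α hα
    rw [hA, Finset.mem_union] at hα
    rcases hα with hα | hα
    · obtain ⟨hne, hαT⟩ := Finset.mem_erase.mp hα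
      obtain ⟨h0, h1⟩ := C.tails_bounds hi α hαT
      exact ⟨h0, by linarith, hne, by intro h'; linarith⟩
    · obtain ⟨t, ht, rfl⟩ := Finset.mem_image.mp hα
      obtain ⟨hne, htT⟩ := Finset.mem_erase.mp ht
      obtain ⟨h0, h1⟩ := C.tails_bounds hi t htT
      refine ⟨by linarith, by linarith, by positivity, ?_⟩
      intro h'
      exact hne (by linarith)
  have hAmem : ∀ α ∈ A, ∀ h' ∈ C.ends i₀, h' + α ∈ C.bdF n := by
    intro α hα h' hh'
    rw [hA, Finset.mem_union] at hα
    rcases hα with hα | hα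
    · exact C.left_mem_bdF hi hh' (Finset.mem_erase.mp hα).2
    · obtain ⟨t, ht, rfl⟩ := Finset.mem_image.mp hα
      have := C.right_mem_bdF hi hh' (Finset.mem_erase.mp ht).2
      rwa [show h' + t + C.len n = h' + (t + C.len n) from by ring] at this
  have himg : (C.bdF n).image (fun z => (C.bdF n).filter (fun w => C.RF i₀ w z)) =
      insert ((C.bdF n).filter (fun w => C.RF i₀ w 0))
        (A.image (fun α => (C.ends i₀).image (fun a => a + α))) := by
    ext S
    simp only [Finset.mem_image, Finset.mem_insert]
    constructor
    · rintro ⟨z, hz, rfl⟩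
      by_cases hz0 : C.RF i₀ z 0
      · left
        obtain ⟨rz, hrz⟩ := hz0
        apply Finset.filter_congr
        intro w _
        constructor
        · rintro ⟨r, hr⟩
          exact ⟨r + rz, by push_cast; linarith⟩
        · rintro ⟨r, hr⟩
          exact ⟨r - rz, by push_cast; linarith⟩
      · right
        obtain ⟨h, hh, α, rfl, hα0, hα1, hne0, hneL, hmem, hαA⟩ := decomp hn hz hz0
        refine ⟨α, ?_, (filter_eq hn hh hα0 hα1 hne0 hneL hmem).symm⟩
        rw [hA, Finset.mem_union]
        exact hαA
    · rintro (rfl | ⟨α, hα, rfl⟩)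
      · refine ⟨0, ?_, rfl⟩
        have := C.left_mem_bdF hi (C.zero_mem_ends i₀) (C.tails_zero_mem hi)
        simpa using this
      · obtain ⟨h0, h1, h2, h3⟩ := hAprop α hα
        refine ⟨0 + α, ?_, ?_⟩
        · have := hAmem α hα 0 (C.zero_mem_ends i₀)
          exact this
        · exact filter_eq hn (C.zero_mem_ends i₀) h0 h1 h2 h3 (hAmem α hα)
  have hTne : (0:ℝ) ∈ C.tails i₀ n := C.tails_zero_mem hi
  have hTmax : C.len i₀ - C.len n ∈ C.tails i₀ n := C.tails_max_mem hi
  have hAcard : A.card = (C.tails i₀ n).card - 1 + ((C.tails i₀ n).card - 1) := by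
    rw [hA]
    have hdisj : Disjoint ((C.tails i₀ n).erase 0)
        (((C.tails i₀ n).erase (C.len i₀ - C.len n)).image (fun t => t + C.len n)) := by
      rw [Finset.disjoint_left]
      rintro t ht hmem
      obtain ⟨t', ht', heq⟩ := Finset.mem_image.mp hmem
      have htT := (Finset.mem_erase.mp ht).2
      have ht'T := (Finset.mem_erase.mp ht').2
      by_cases hne : t = t'
      · subst hne; linarith
      · have := C.tails_sep hi t htT t' ht'T hne
        rw [show t - t' = C.len n from by linarith, abs_of_pos hl] at this
        linarith
    rw [Finset.card_union_of_disjoint hdisj,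
      Finset.card_image_of_injective _ (add_left_injective _),
      Finset.card_erase_of_mem hTne, Finset.card_erase_of_mem hTmax]
  have hnotmem : (C.bdF n).filter (fun w => C.RF i₀ w 0) ∉
      A.image (fun α => (C.ends i₀).image (fun a => a + α)) := by
    intro hmem
    obtain ⟨α, hα, heq⟩ := Finset.mem_image.mp hmem
    have h1 : ((C.ends i₀).image (fun a => a + α)).card = C.prodM i₀ := by
      rw [Finset.card_image_of_injective _ (add_left_injective _), C.ends_card]
    have h2 := filter0_card (C := C) hn
    rw [← heq, h1] at h2
    have := C.prodM_pos i₀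
    omega
  have hinjA : Set.InjOn (fun α => (C.ends i₀).image (fun a => a + α)) A := by
    intro α hα α' hα' heq
    simp only [] at heq
    beta_reduce at heq
    have m1 : α ∈ (C.ends i₀).image (fun a => a + α) :=
      Finset.mem_image.mpr ⟨0, C.zero_mem_ends i₀, by simp⟩
    have m2 : α' ∈ (C.ends i₀).image (fun a => a + α') :=
      Finset.mem_image.mpr ⟨0, C.zero_mem_ends i₀, by simp⟩
    rw [heq] at m1
    rw [← heq] at m2
    obtain ⟨a, ha, haeq⟩ := Finset.mem_image.mp m1
    obtain ⟨a', ha', haeq'⟩ := Finset.mem_image.mp m2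
    have h1 := (C.ends_bounds ha).1
    have h2 := (C.ends_bounds ha').1
    linarith
  have hTcard : (C.tails i₀ n).card = ∏ i ∈ Finset.Icc (i₀ + 1) n, C.m i :=
    C.tails_card hi
  have hTpos : 0 < (C.tails i₀ n).card := Finset.card_pos.mpr ⟨0, hTne⟩
  rw [himg, Finset.card_insert_of_notMem hnotmem, Finset.card_image_of_injOn hinjA,
    hAcard, ← hTcard]
  omega


end QSCantor

/-- Fix `1 ≤ i₀ < n`.  On the set `∂Aₙ` of endpoints of the stage-`n` intervals, the
relation `z ∼ w ⇔ z - w ∈ (1/(k₁⋯k_{i₀}))·ℤ` is an equivalence relation; the class of `0`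
has `2·m₁⋯m_{i₀}` elements, every other class has `m₁⋯m_{i₀}` elements, and the number of
classes is `2·m_{i₀+1}⋯mₙ - 1`. -/
theorem stmt13 (C : QSCantor) (i₀ n : ℕ) (h₀ : 1 ≤ i₀) (hn : i₀ < n) :
    let bd : Finset ℝ := C.ends n ∪ (C.ends n).image (fun a => a + C.len n)
    let R : ℝ → ℝ → Prop := fun z w => ∃ r : ℤ, z - w = (r : ℝ) * C.len i₀
    (∀ z ∈ bd, R z z) ∧
    (∀ z ∈ bd, ∀ w ∈ bd, R z w → R w z) ∧
    (∀ z ∈ bd, ∀ w ∈ bd, ∀ v ∈ bd, R z w → R w v → R z v) ∧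
    (bd.filter (fun w => R w 0)).card = 2 * C.prodM i₀ ∧
    (∀ z ∈ bd, ¬ R z 0 → (bd.filter (fun w => R w z)).card = C.prodM i₀) ∧
    (bd.image (fun z => bd.filter (fun w => R w z))).card =
      2 * (∏ i ∈ Finset.Icc (i₀ + 1) n, C.m i) - 1 := by
  intro bd R
  exact ⟨fun z _ => ⟨0, by simp⟩,
    fun z _ w _ => fun ⟨r, hr⟩ => ⟨-r, by push_cast; linarith⟩,
    fun z _ w _ v _ => fun ⟨r, hr⟩ ⟨r', hr'⟩ => ⟨r + r', by push_cast; linarith⟩,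
    QSCantor.filter0_card (C := C) hn,
    fun z hz hnR => QSCantor.filter_card (C := C) hn hz hnR,
    QSCantor.class_count (C := C) hn⟩
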